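/- Let (X,d) be a compact metric space and f_{0,∞} = {f_n}_{n=0}^∞ a sequence of continuous self-maps of X. If the induced non-autonomous system (𝓜(X), f̂_{0,∞}) on the space of Borel probability measures is topologically transitive, then (X, f_{0,∞}) is topologically transitive. -/

import Mathlib

open MeasureTheory Filter
open scoped ENNReal

/-- `nacomp f n = f_{n-1} ∘ ⋯ ∘ f_0` (with `nacomp f 0 = id`): the time-`n` map of the
non-autonomous system `(X, f_{0,∞})`. -/
def nacomp {Y : Type*} (f : ℕ → Y → Y) : ℕ → Y → Y
  | 0 => id
  | n + 1 => f n ∘ nacomp f n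

/-- The induced pushforward map `f̂` on the space `𝓜(X)` of Borel probability measures,
equipped with the Lévy–Prokhorov metric. -/
noncomputable def inducedMap {X : Type*} [MetricSpace X] [MeasurableSpace X] [BorelSpace X]
    (f : X → X) (hf : Continuous f) :
    LevyProkhorov (ProbabilityMeasure X) → LevyProkhorov (ProbabilityMeasure X) :=
  fun μ => (LevyProkhorov.toMeasureEquiv (α := ProbabilityMeasure X)).symm
    (((LevyProkhorov.toMeasureEquiv (α := ProbabilityMeasure X)) μ).map hf.measurable.aemeasurable)

/-- Topological transitivity of the non-autonomous system given by the maps `f n`. -/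
def NATransitive {Y : Type*} [TopologicalSpace Y] (f : ℕ → Y → Y) : Prop :=
  ∀ U V : Set Y, IsOpen U → IsOpen V → U.Nonempty → V.Nonempty →
    ∃ n, 1 ≤ n ∧ (nacomp f n '' U ∩ V).Nonempty

lemma nacomp_continuous {Y : Type*} [TopologicalSpace Y] (f : ℕ → Y → Y)
    (hf : ∀ n, Continuous (f n)) (n : ℕ) : Continuous (nacomp f n) := by
  induction n with
  | zero => exact continuous_id
  | succ n ih => exact (hf n).comp ih

/-- The time-`n` map of the induced system is the pushforward by the time-`n` map. -/
lemma nacomp_inducedMap {X : Type*} [MetricSpace X] [MeasurableSpace X] [BorelSpace X]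
    (f : ℕ → X → X) (hf : ∀ n, Continuous (f n)) (n : ℕ)
    (μ : LevyProkhorov (ProbabilityMeasure X)) :
    (LevyProkhorov.toMeasureEquiv (α := ProbabilityMeasure X)) (nacomp (fun n => inducedMap (f n) (hf n)) n μ)
      = ((LevyProkhorov.toMeasureEquiv (α := ProbabilityMeasure X)) μ).map
          (nacomp_continuous f hf n).measurable.aemeasurable := by
  induction n with
  | zero =>
      apply ProbabilityMeasure.toMeasure_injective
      simp [nacomp, Measure.map_id]
  | succ n ih =>
      apply ProbabilityMeasure.toMeasure_injective
      show (((LevyProkhorov.toMeasureEquiv (α := ProbabilityMeasure X))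
        (inducedMap (f n) (hf n) (nacomp (fun n => inducedMap (f n) (hf n)) n μ))) : Measure X) = _
      rw [show (LevyProkhorov.toMeasureEquiv (α := ProbabilityMeasure X))
        (inducedMap (f n) (hf n) (nacomp (fun n => inducedMap (f n) (hf n)) n μ)) =
        ((LevyProkhorov.toMeasureEquiv (α := ProbabilityMeasure X))
          (nacomp (fun n => inducedMap (f n) (hf n)) n μ)).map
          (hf n).measurable.aemeasurable from rfl, ih]
      simp only [ProbabilityMeasure.toMeasure_map]
      rw [Measure.map_map (hf n).measurable (nacomp_continuous f hf n).measurable]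
      rfl

/-- For an open set `U`, the set of probability measures giving `U` mass `> c` is open
in the topology of convergence in distribution. -/
lemma isOpen_measure_gt {X : Type*} [MetricSpace X] [MeasurableSpace X] [BorelSpace X]
    {U : Set X} (hU : IsOpen U) (c : ℝ≥0∞) :
    IsOpen {μ : ProbabilityMeasure X | c < (μ : Measure X) U} := by
  rw [← isClosed_compl_iff]
  rw [isClosed_iff_clusterPt]
  intro μ hμ
  set L := nhds μ ⊓ Filter.principal {μ : ProbabilityMeasure X | c < (μ : Measure X) U}ᶜ with hL
  haveI : L.NeBot := hμ
  have h1 : Tendsto (id : ProbabilityMeasure X → ProbabilityMeasure X) L (nhds μ) :=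
    tendsto_inf_left tendsto_id
  have h2 := MeasureTheory.ProbabilityMeasure.le_liminf_measure_open_of_tendsto h1 hU
  have h3 : L.liminf (fun ν : ProbabilityMeasure X => (ν : Measure X) U) ≤ c := by
    apply Filter.liminf_le_of_frequently_le ?_ (by isBoundedDefault)
    apply Filter.Eventually.frequently
    have : ∀ᶠ ν in L, ν ∈ {μ : ProbabilityMeasure X | c < (μ : Measure X) U}ᶜ :=
      Filter.eventually_inf_principal.mpr (Filter.Eventually.of_forall fun ν hν => hν)
    filter_upwards [this] with ν hν
    exact not_lt.mp hν
  simp only [Set.mem_compl_iff, Set.mem_setOf_eq, not_lt]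
  exact h2.trans h3

/-- If the induced non-autonomous system on the space of Borel probability measures is
topologically transitive, then so is the base system. -/
theorem transitive_of_induced_transitive
    {X : Type*} [MetricSpace X] [CompactSpace X] [MeasurableSpace X] [BorelSpace X]
    (f : ℕ → X → X) (hf : ∀ n, Continuous (f n))
    (h : NATransitive (fun n => inducedMap (f n) (hf n))) :
    NATransitive f := by
  rcases isEmpty_or_nonempty X with hX | hX
  · intro U V hUo hVo ⟨x, _⟩ _
    exact absurd (Set.nonempty_iff_ne_empty.mp ⟨x, ‹x ∈ U›⟩) (by simp [Set.eq_empty_of_isEmpty])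
  intro U V hUo hVo ⟨x, hx⟩ ⟨y, hy⟩
  set E := LevyProkhorov.toMeasureEquiv (α := ProbabilityMeasure X)
  have hEcont : Continuous (E : LevyProkhorov (ProbabilityMeasure X) → ProbabilityMeasure X) :=
    MeasureTheory.LevyProkhorov.continuous_toMeasure_probabilityMeasure
  set SU : Set (ProbabilityMeasure X) := {μ | (1/2 : ℝ≥0∞) < (μ : Measure X) U} with hSU
  set SV : Set (ProbabilityMeasure X) := {μ | (1/2 : ℝ≥0∞) < (μ : Measure X) V} with hSV
  have hSUo : IsOpen (E ⁻¹' SU) := (isOpen_measure_gt hUo _).preimage hEcont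
  have hSVo : IsOpen (E ⁻¹' SV) := (isOpen_measure_gt hVo _).preimage hEcont
  -- Dirac measures show nonemptiness
  have dirac_mem : ∀ (z : X) (W : Set X), z ∈ W →
      (1/2 : ℝ≥0∞) < ((⟨Measure.dirac z, inferInstance⟩ : ProbabilityMeasure X) : Measure X) W := by
    intro z W hz
    show (1/2 : ℝ≥0∞) < Measure.dirac z W
    rw [Measure.dirac_apply_of_mem hz]
    exact ENNReal.half_lt_self one_ne_zero ENNReal.one_ne_top
  have hUne : (E ⁻¹' SU).Nonempty :=
    ⟨E.symm ⟨Measure.dirac x, inferInstance⟩, by exact dirac_mem x U hx⟩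
  have hVne : (E ⁻¹' SV).Nonempty :=
    ⟨E.symm ⟨Measure.dirac y, inferInstance⟩, by exact dirac_mem y V hy⟩
  obtain ⟨n, hn1, ν, ⟨μ0, hμ0U, hmap⟩, hνV⟩ := h _ _ hSUo hSVo hUne hVne
  refine ⟨n, hn1, ?_⟩
  -- unpack: ν = nacomp induced n μ0, E ν = (E μ0).map (nacomp f n)
  have key := nacomp_inducedMap f hf n μ0
  rw [hmap] at key
  have hνV' : (1/2 : ℝ≥0∞) < ((E ν : ProbabilityMeasure X) : Measure X) V := hνV
  rw [key] at hνV'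
  rw [ProbabilityMeasure.toMeasure_map] at hνV'
  rw [Measure.map_apply (nacomp_continuous f hf n).measurable hVo.measurableSet] at hνV'
  have hμ0U' : (1/2 : ℝ≥0∞) < ((E μ0 : ProbabilityMeasure X) : Measure X) U := hμ0U
  -- U and (nacomp f n)⁻¹' V must intersect
  set μ : Measure X := ((E μ0 : ProbabilityMeasure X) : Measure X) with hμdef
  have hdisj : (U ∩ nacomp f n ⁻¹' V).Nonempty := by
    by_contra hcon
    rw [Set.not_nonempty_iff_eq_empty] at hcon
    have hdj : Disjoint U (nacomp f n ⁻¹' V) := Set.disjoint_iff_inter_eq_empty.mpr hcon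
    have hun : μ U + μ (nacomp f n ⁻¹' V) = μ (U ∪ nacomp f n ⁻¹' V) :=
      (measure_union hdj (hVo.preimage (nacomp_continuous f hf n)).measurableSet).symm
    have hle : μ (U ∪ nacomp f n ⁻¹' V) ≤ 1 := prob_le_one
    have : (1 : ℝ≥0∞) < μ U + μ (nacomp f n ⁻¹' V) := by
      have := ENNReal.add_lt_add hμ0U' hνV'
      rw [show ((1:ℝ≥0∞)/2) + 1/2 = 1 from ENNReal.add_halves 1] at this; exact this
    rw [hun] at this
    exact absurd (this.trans_le hle) (lt_irrefl 1)
  obtain ⟨z, hzU, hzV⟩ := hdisj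
  exact ⟨nacomp f n z, ⟨z, hzU, rfl⟩, hzV⟩
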